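/- arXiv:0910.4857 — 2 statements merged into one kernel-verified Lean document; each statement's English description precedes it below -/
import Mathlib

section
/- In any monoid M admitting a presentation satisfying the condition C(2), the set of non-identity indecomposable elements of M forms a generating set for M, and this set is contained in every generating set for M. -/
open FreeMonoid

/-- The congruence on the free monoid generated by a presentation `R`. -/
def presCon {A : Type*} (R : Set (FreeMonoid A × FreeMonoid A)) : Con (FreeMonoid A) :=
  conGen fun u v => (u, v) ∈ R

/-- `w` is a relation word of the presentation `R`. -/
def IsRelWord {A : Type*} (R : Set (FreeMonoid A × FreeMonoid A)) (w : FreeMonoid A) : Prop :=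
  ∃ p ∈ R, p.1 = w ∨ p.2 = w

/-- `u` is a factor of `w`. -/
def IsFactor {A : Type*} (u w : FreeMonoid A) : Prop := ∃ p q, w = p * u * q

/-- `u` is a piece of the presentation `R`: it is empty, or occurs as a factor of two
distinct relation words, or in two different (possibly overlapping) positions within
one relation word. -/
def IsPiece {A : Type*} (R : Set (FreeMonoid A × FreeMonoid A)) (u : FreeMonoid A) : Prop :=
  u = 1 ∨
  (∃ w₁ w₂, IsRelWord R w₁ ∧ IsRelWord R w₂ ∧ w₁ ≠ w₂ ∧ IsFactor u w₁ ∧ IsFactor u w₂) ∨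
  (∃ w, IsRelWord R w ∧ ∃ p q p' q', w = p * u * q ∧ w = p' * u * q' ∧ p ≠ p')

/-- The small overlap condition `C(m)`: no relation word is a product of strictly fewer
than `m` pieces. -/
def SmallOverlapC {A : Type*} (R : Set (FreeMonoid A × FreeMonoid A)) (m : ℕ) : Prop :=
  ∀ w, IsRelWord R w → ∀ l : List (FreeMonoid A),
    (∀ x ∈ l, IsPiece R x) → l.prod = w → m ≤ l.length

universe u v

section Aux

variable {A : Type*} {R : Set (FreeMonoid A × FreeMonoid A)}

/-- One elementary rewriting step. -/
def RStep (R : Set (FreeMonoid A × FreeMonoid A)) (x y : FreeMonoid A) : Prop :=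
  ∃ p q s t, ((s, t) ∈ R ∨ (t, s) ∈ R) ∧ x = p * s * q ∧ y = p * t * q

lemma rstep_symm {x y : FreeMonoid A} (h : RStep R x y) : RStep R y x := by
  obtain ⟨p, q, s, t, hr, hx, hy⟩ := h
  exact ⟨p, q, t, s, hr.symm, hy, hx⟩

lemma rstep_mul {a b : FreeMonoid A} (h : RStep R a b) (x y : FreeMonoid A) :
    RStep R (x * a * y) (x * b * y) := by
  obtain ⟨p, q, s, t, hr, ha, hb⟩ := h
  exact ⟨x * p, q * y, s, t, hr, by rw [ha]; simp [mul_assoc], by rw [hb]; simp [mul_assoc]⟩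

lemma eqv_mul {a b : FreeMonoid A} (h : Relation.EqvGen (RStep R) a b) (x y : FreeMonoid A) :
    Relation.EqvGen (RStep R) (x * a * y) (x * b * y) := by
  induction h with
  | rel u v huv => exact .rel _ _ (rstep_mul huv x y)
  | refl u => exact .refl _
  | symm u v _ ih => exact .symm _ _ ih
  | trans u v w _ _ ih1 ih2 => exact .trans _ _ _ ih1 ih2

/-- The `Con` structure on `EqvGen (RStep R)`. -/
def stepCon (R : Set (FreeMonoid A × FreeMonoid A)) : Con (FreeMonoid A) where
  r := Relation.EqvGen (RStep R)
  iseqv := Relation.EqvGen.is_equivalence _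
  mul' := by
    intro w x y z h1 h2
    have h1' := eqv_mul h1 1 y
    have h2' := eqv_mul h2 x 1
    simp only [one_mul, mul_one] at h1' h2'
    exact h1'.trans _ _ _ h2'

lemma presCon_imp {u v : FreeMonoid A} (h : presCon R u v) :
    Relation.EqvGen (RStep R) u v :=
  (Con.conGen_le (c := stepCon R)).mpr
    (fun x y hxy => Relation.EqvGen.rel x y ⟨1, 1, x, y, Or.inl hxy, by simp, by simp⟩) h

variable (hC : SmallOverlapC R 2)
include hC

lemma relword_ne_one {w : FreeMonoid A} (hw : IsRelWord R w) : w ≠ 1 := by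
  intro h
  have := hC w hw [] (by simp) (by simp [h])
  simp at this

lemma relword_factor {w s : FreeMonoid A} (hw : IsRelWord R w) (hs : IsRelWord R s)
    (hf : IsFactor s w) : s = w := by
  by_contra hne
  have hp : IsPiece R s := Or.inr (Or.inl ⟨s, w, hs, hw, hne, ⟨1, 1, by simp⟩, hf⟩)
  have := hC s hs [s] (by simpa using hp) (by simp)
  simp at this

omit hC

/-- The key invariant. -/
def Good (R : Set (FreeMonoid A × FreeMonoid A)) (w : FreeMonoid A) : Prop :=
  w.toList.length = 1 ∨ IsRelWord R w

include hC

lemma good_step {x y : FreeMonoid A} (hx : Good R x) (hst : RStep R x y) : Good R y := by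
  obtain ⟨p, q, s, t, hr, hxe, hye⟩ := hst
  have hs : IsRelWord R s := by
    rcases hr with h | h
    · exact ⟨(s, t), h, Or.inl rfl⟩
    · exact ⟨(t, s), h, Or.inr rfl⟩
  have ht : IsRelWord R t := by
    rcases hr with h | h
    · exact ⟨(s, t), h, Or.inr rfl⟩
    · exact ⟨(t, s), h, Or.inl rfl⟩
  have hpq : p = 1 ∧ q = 1 := by
    have hlen : x.toList.length = p.toList.length + s.toList.length + q.toList.length := by
      rw [hxe]; simp [toList_mul]; omega
    have hs1 : s.toList.length ≠ 0 := by
      intro h0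
      exact relword_ne_one hC hs (toList.injective (by
        rw [List.length_eq_zero_iff] at h0; simp [h0]))
    rcases hx with hl | hrw
    · refine ⟨toList.injective ?_, toList.injective ?_⟩ <;>
        · rw [toList_one, ← List.length_eq_zero_iff]; omega
    · have := relword_factor hC hrw hs ⟨p, q, hxe⟩
      rw [this] at hlen
      constructor <;>
        · apply toList.injective
          rw [toList_one, ← List.length_eq_zero_iff]
          omega
  obtain ⟨hp1, hq1⟩ := hpq
  right
  have : y = t := by rw [hye, hp1, hq1, one_mul, mul_one]
  rwa [this]

lemma good_iff {u v : FreeMonoid A} (h : Relation.EqvGen (RStep R) u v) :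
    (Good R u ↔ Good R v) := by
  induction h with
  | rel a b hab => exact ⟨fun h => good_step hC h hab, fun h => good_step hC h (rstep_symm hab)⟩
  | refl a => exact Iff.rfl
  | symm a b _ ih => exact ih.symm
  | trans a b c _ _ ih1 ih2 => exact ih1.trans ih2

lemma fixed_class {c : FreeMonoid A} (hc : ∀ s, IsRelWord R s → IsFactor s c → False)
    {u v : FreeMonoid A} (h : Relation.EqvGen (RStep R) u v) : (u = c ↔ v = c) := by
  induction h with
  | rel a b hab =>
    obtain ⟨p, q, s, t, hr, ha, hb⟩ := hab
    have hs : IsRelWord R s := by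
      rcases hr with h | h
      · exact ⟨(s, t), h, Or.inl rfl⟩
      · exact ⟨(t, s), h, Or.inr rfl⟩
    have ht : IsRelWord R t := by
      rcases hr with h | h
      · exact ⟨(s, t), h, Or.inr rfl⟩
      · exact ⟨(t, s), h, Or.inl rfl⟩
    exact iff_of_false (fun hac => hc s hs ⟨p, q, hac ▸ ha⟩)
      (fun hbc => hc t ht ⟨p, q, hbc ▸ hb⟩)
  | refl a => exact Iff.rfl
  | symm a b _ ih => exact ih.symm
  | trans a b c _ _ ih1 ih2 => exact ih1.trans ih2

/-- No relation word is a factor of `1`. -/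
lemma no_factor_one : ∀ s, IsRelWord R s → IsFactor s (1 : FreeMonoid A) → False := by
  intro s hs ⟨p, q, hpq⟩
  have hlen := congrArg (fun w => (toList w).length) hpq
  simp [toList_mul] at hlen
  apply relword_ne_one hC hs
  apply toList.injective
  rw [toList_one, ← List.length_eq_zero_iff]
  omega

/-- No relation word is a factor of a single non-relation-word letter. -/
lemma no_factor_letter {b : A} (hb : ¬ IsRelWord R (of b)) :
    ∀ s, IsRelWord R s → IsFactor s (of b) → False := by
  intro s hs ⟨p, q, hpq⟩
  have hlen := congrArg (fun w => (toList w).length) hpq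
  simp [toList_mul, toList_of] at hlen
  have hs0 : s.toList.length ≠ 0 := by
    intro h0
    exact relword_ne_one hC hs (toList.injective (by
      rw [List.length_eq_zero_iff] at h0; simp [h0]))
  have hp : p = 1 := toList.injective (by rw [toList_one, ← List.length_eq_zero_iff]; omega)
  have hq : q = 1 := toList.injective (by rw [toList_one, ← List.length_eq_zero_iff]; omega)
  rw [hp, hq, one_mul, mul_one] at hpq
  exact hb (hpq ▸ hs)

omit hC

lemma con_ne_one (hC : SmallOverlapC R 2) {u : FreeMonoid A} {a : A}
    (h : presCon R u (of a)) : u ≠ 1 := by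
  intro h1
  subst h1
  have := (fixed_class hC (no_factor_one hC) (presCon_imp h)).mp rfl
  exact List.cons_ne_nil a [] (by simpa using congrArg toList this.symm)

/-- Criterion for the class of a letter to be indecomposable. -/
lemma indec_of_short (hC : SmallOverlapC R 2) {a : A}
    (hlen : ∀ u : FreeMonoid A, presCon R u (of a) → u.toList.length = 1) :
    ((of a : FreeMonoid A) : (presCon R).Quotient) ∈
      {s : (presCon R).Quotient | s ≠ 1 ∧ ∀ x y, x * y = s → x = 1 ∨ y = 1} := by
  constructor
  · intro h1
    have : ((1 : FreeMonoid A) : (presCon R).Quotient) = ((of a : FreeMonoid A) :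
        (presCon R).Quotient) := by rw [Con.coe_one, h1]
    have hc : presCon R 1 (of a) := (Con.eq _).mp this
    have := hlen 1 hc
    simp [toList_one] at this
  · intro x y hxy
    obtain ⟨p, rfl⟩ := Con.mk'_surjective (c := presCon R) x
    obtain ⟨q, rfl⟩ := Con.mk'_surjective (c := presCon R) y
    have hc : presCon R (p * q) (of a) := by
      rw [← Con.eq]
      simpa [Con.coe_mul] using hxy
    have h1 := hlen (p * q) hc
    rw [toList_mul, List.length_append] at h1
    rcases Nat.eq_zero_or_pos p.toList.length with h0 | h0
    · left
      have : p = 1 := toList.injective (by rw [toList_one, ← List.length_eq_zero_iff]; omega)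
      simp [this]
    · right
      have : q = 1 := toList.injective (by rw [toList_one, ← List.length_eq_zero_iff]; omega)
      simp [this]

lemma ofList_eq_prod (l : List A) : ofList l = (l.map of).prod := by
  induction l with
  | nil => rfl
  | cons a l ih => rw [ofList_cons, ih]; rfl

/-- Every letter class lies in the closure of the indecomposables. -/
lemma letter_mem (hC : SmallOverlapC R 2) (a : A) :
    ((of a : FreeMonoid A) : (presCon R).Quotient) ∈
      Submonoid.closure {s : (presCon R).Quotient | s ≠ 1 ∧
        ∀ x y, x * y = s → x = 1 ∨ y = 1} := by
  by_cases h : ∃ w : FreeMonoid A, presCon R (of a) w ∧ 2 ≤ w.toList.length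
  · obtain ⟨w, hw, hlen⟩ := h
    have hg : Good R w := (good_iff hC (presCon_imp hw)).mp (Or.inl (by simp [toList_of]))
    have hrw : IsRelWord R w := by
      rcases hg with h1 | h1
      · omega
      · exact h1
    have hcoe : ((of a : FreeMonoid A) : (presCon R).Quotient) = (w : (presCon R).Quotient) :=
      (Con.eq _).mpr hw
    rw [hcoe]
    have hw' : w = ofList w.toList := toList.injective (by rw [toList_ofList])
    rw [hw', ofList_eq_prod]
    have : ((((w.toList.map of).prod : FreeMonoid A)) : (presCon R).Quotient) =
        (w.toList.map (fun c => ((of c : FreeMonoid A) : (presCon R).Quotient))).prod := by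
      rw [← Con.coe_mk' (c := presCon R)] at *
      rw [map_list_prod ((presCon R).mk') (w.toList.map of), List.map_map]
      rfl
    rw [this]
    apply Submonoid.list_prod_mem
    intro x hx
    obtain ⟨c, hc, rfl⟩ := List.mem_map.mp hx
    -- `c` is a letter of `w`; it is not a relation word
    have hcnot : ¬ IsRelWord R (of c) := by
      intro hcrel
      obtain ⟨l₁, l₂, hl⟩ := List.append_of_mem hc
      have hfac : IsFactor (of c) w := by
        refine ⟨ofList l₁, ofList l₂, toList.injective ?_⟩
        simp [toList_mul, toList_ofList, toList_of, hl]
      have := relword_factor hC hrw hcrel hfac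
      have := congrArg (fun u => (toList u).length) this
      simp [toList_of] at this
      omega
    apply Submonoid.subset_closure
    apply indec_of_short hC
    intro u hu
    have := (fixed_class hC (no_factor_letter hC hcnot) (presCon_imp hu)).mpr rfl
    rw [this]
    simp [toList_of]
  · push_neg at h
    apply Submonoid.subset_closure
    apply indec_of_short hC
    intro u hu
    have h2 := h u ((presCon R).symm hu)
    have h1 : u ≠ 1 := con_ne_one hC hu
    have h0 : u.toList.length ≠ 0 := by
      intro h0
      exact h1 (toList.injective (by rw [toList_one, ← List.length_eq_zero_iff]; omega))
    omega

/-- Part 1 in the quotient monoid. -/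
lemma closure_top (hC : SmallOverlapC R 2) :
    Submonoid.closure {s : (presCon R).Quotient | s ≠ 1 ∧
      ∀ x y, x * y = s → x = 1 ∨ y = 1} = ⊤ := by
  rw [eq_top_iff]
  rintro x -
  obtain ⟨w, rfl⟩ := Con.mk'_surjective (c := presCon R) x
  have hw' : w = ofList w.toList := toList.injective (by rw [toList_ofList])
  rw [hw', ofList_eq_prod, map_list_prod ((presCon R).mk') (w.toList.map of), List.map_map]
  apply Submonoid.list_prod_mem
  intro x hx
  obtain ⟨c, _, rfl⟩ := List.mem_map.mp hx
  exact letter_mem hC c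

end Aux

/-- **Corollary.** In any monoid admitting a C(2) presentation, the set of non-identity
indecomposable elements is a generating set which is contained in every generating set. -/
theorem statement6 {M : Type u} [Monoid M]
    (h : ∃ (A : Type v) (R : Set (FreeMonoid A × FreeMonoid A)),
      SmallOverlapC R 2 ∧ Nonempty (M ≃* (presCon R).Quotient)) :
    Submonoid.closure {s : M | s ≠ 1 ∧ ∀ x y : M, x * y = s → x = 1 ∨ y = 1} = ⊤ ∧
    ∀ S : Set M, Submonoid.closure S = ⊤ →
      {s : M | s ≠ 1 ∧ ∀ x y : M, x * y = s → x = 1 ∨ y = 1} ⊆ S := by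
  obtain ⟨A, R, hC, ⟨e⟩⟩ := h
  constructor
  · -- Part 1: transfer `closure_top` along the isomorphism.
    set DM : Set M := {s : M | s ≠ 1 ∧ ∀ x y : M, x * y = s → x = 1 ∨ y = 1} with hDM
    have hQ := closure_top hC
    rw [eq_top_iff]
    rintro m -
    have hsub : {s : (presCon R).Quotient | s ≠ 1 ∧ ∀ x y, x * y = s → x = 1 ∨ y = 1} ⊆
        ((Submonoid.closure DM).map e.toMonoidHom : Set (presCon R).Quotient) := by
      rintro t ⟨ht1, ht2⟩
      refine ⟨e.symm t, Submonoid.subset_closure ⟨?_, ?_⟩, by simp⟩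
      · intro h0
        apply ht1
        have : t = e (e.symm t) := (e.apply_symm_apply t).symm
        rw [this, h0, map_one]
      · intro x y hxy
        have hxy' : e x * e y = t := by
          rw [← map_mul, hxy, e.apply_symm_apply]
        rcases ht2 _ _ hxy' with h1 | h1
        · left; exact e.injective (by rw [h1, map_one])
        · right; exact e.injective (by rw [h1, map_one])
    have hle : Submonoid.closure {s : (presCon R).Quotient | s ≠ 1 ∧
        ∀ x y, x * y = s → x = 1 ∨ y = 1} ≤ (Submonoid.closure DM).map e.toMonoidHom :=
      Submonoid.closure_le.mpr hsub
    have hmem : e m ∈ (Submonoid.closure DM).map e.toMonoidHom :=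
      hle (hQ ▸ Submonoid.mem_top (e m))
    obtain ⟨m', hm', hm'e⟩ := hmem
    have : m' = m := e.injective hm'e
    exact this ▸ hm'
  · -- Part 2: generic for any monoid.
    rintro S hS s ⟨hs1, hs2⟩
    have hm : s ∈ Submonoid.closure S := hS ▸ Submonoid.mem_top s
    obtain ⟨l, hl, hprod⟩ := Submonoid.exists_list_of_mem_closure hm
    clear hm hS
    induction l with
    | nil => exact absurd hprod.symm hs1
    | cons hd tl ih =>
      rcases hs2 hd tl.prod (by simpa using hprod) with h1 | h1
      · exact ih (fun y hy => hl y (List.mem_cons_of_mem hd hy))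
          (by rw [← hprod]; simp [h1])
      · have : s = hd := by rw [← hprod, List.prod_cons, h1, mul_one]
        exact this ▸ hl hd List.mem_cons_self
end

section
/- Let m be a positive integer and let ⟨A|R⟩ be a generator-minimal presentation which is strongly C(2) and which presents a monoid admitting some strongly C(m) presentation. Then ⟨A|R⟩ itself is strongly C(m). -/
open FreeMonoid

/-- The generator `a` is redundant: its class is a product of classes of other
generators. -/
def IsRedundant {A : Type*} (R : Set (FreeMonoid A × FreeMonoid A)) (a : A) : Prop :=
  (presCon R).mk' (of a) ∈
    Submonoid.closure {x : (presCon R).Quotient | ∃ b : A, b ≠ a ∧ x = (presCon R).mk' (of b)}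

/-- A presentation is generator-minimal if no generator is redundant. -/
def GeneratorMinimal {A : Type*} (R : Set (FreeMonoid A × FreeMonoid A)) : Prop :=
  ∀ a : A, ¬ IsRedundant R a

/-- `⟨A|R⟩` is an equivalence presentation: `R` is an equivalence relation on the set
of relation words. -/
def IsEquivPres {A : Type*} (R : Set (FreeMonoid A × FreeMonoid A)) : Prop :=
  (∀ w, IsRelWord R w → (w, w) ∈ R) ∧
  (∀ u v, (u, v) ∈ R → (v, u) ∈ R) ∧
  (∀ u v w, (u, v) ∈ R → (v, w) ∈ R → (u, w) ∈ R)

/-- No repeated relation words: no word occurs as a side of two distinct relations or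
as both sides of a single relation. -/
def NoRepeatedRelWords {A : Type*} (R : Set (FreeMonoid A × FreeMonoid A)) : Prop :=
  (∀ p ∈ R, p.1 ≠ p.2) ∧
  (∀ p ∈ R, ∀ q ∈ R, p ≠ q → p.1 ≠ q.1 ∧ p.1 ≠ q.2 ∧ p.2 ≠ q.1 ∧ p.2 ≠ q.2)

/-- The strong small overlap condition: C(m) together with no repeated relation words. -/
def StronglyC {A : Type*} (R : Set (FreeMonoid A × FreeMonoid A)) (m : ℕ) : Prop :=
  SmallOverlapC R m ∧ NoRepeatedRelWords R


universe u v
universe w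

section Aux

variable {X : Type w}

/-! ### Factor lemmas -/

theorem isFactor_self (w : FreeMonoid X) : IsFactor w w := ⟨1, 1, by simp⟩

theorem isFactor_trans {u w x : FreeMonoid X} (h1 : IsFactor u w) (h2 : IsFactor w x) :
    IsFactor u x := by
  obtain ⟨p, q, hw⟩ := h1
  obtain ⟨p', q', hx⟩ := h2
  exact ⟨p' * p, q * q', by rw [hx, hw]; simp [mul_assoc]⟩

theorem isFactor_mul_right {u w : FreeMonoid X} (t : FreeMonoid X) (h : IsFactor u w) :
    IsFactor u (w * t) := by
  obtain ⟨p, q, hw⟩ := h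
  exact ⟨p, q * t, by rw [hw]; simp [mul_assoc]⟩

theorem isFactor_mul_left {u w : FreeMonoid X} (t : FreeMonoid X) (h : IsFactor u w) :
    IsFactor u (t * w) := by
  obtain ⟨p, q, hw⟩ := h
  exact ⟨t * p, q, by rw [hw]; simp [mul_assoc]⟩

theorem isFactor_length {u w : FreeMonoid X} (h : IsFactor u w) : u.length ≤ w.length := by
  obtain ⟨p, q, hw⟩ := h
  subst hw
  simp [FreeMonoid.length_mul]
  omega

theorem toList_injective {u v : FreeMonoid X} (h : FreeMonoid.toList u = FreeMonoid.toList v) :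
    u = v := by
  rw [← ofList_toList u, h, ofList_toList]

theorem factor_of_mem {a : X} {vl : FreeMonoid X} (h : a ∈ FreeMonoid.toList vl) :
    IsFactor (of a) vl := by
  obtain ⟨s, t, hst⟩ := List.append_of_mem h
  refine ⟨ofList s, ofList t, ?_⟩
  have h2 := congrArg ofList hst
  rw [ofList_toList] at h2
  rw [h2, ofList_append, ofList_cons, mul_assoc]

theorem mem_of_factor {a : X} {vl : FreeMonoid X} (h : IsFactor (of a) vl) :
    a ∈ FreeMonoid.toList vl := by
  obtain ⟨p, q, hw⟩ := h
  subst hw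
  simp [toList_mul]

theorem length_pos_of_ne_one {u : FreeMonoid X} (h : u ≠ 1) : 1 ≤ u.length := by
  rcases Nat.eq_zero_or_pos u.length with h0 | h1
  · exact absurd (FreeMonoid.length_eq_zero.mp h0) h
  · exact h1

theorem eq_one_of_mul_eq_one_left {u w : FreeMonoid X} (h : u * w = 1) : u = 1 := by
  have := congrArg FreeMonoid.length h
  simp [FreeMonoid.length_mul] at this
  exact this.1

theorem exists_head {u : FreeMonoid X} (h : u ≠ 1) : ∃ c t, u = of c * t := by
  induction u using FreeMonoid.recOn with
  | one => exact absurd rfl h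
  | of_mul c t _ => exact ⟨c, t, rfl⟩

theorem exists_split {u : FreeMonoid X} (h : 2 ≤ u.length) :
    ∃ x y, u = x * y ∧ x ≠ 1 ∧ y ≠ 1 := by
  induction u using FreeMonoid.recOn with
  | one => simp at h
  | of_mul c t _ =>
    refine ⟨of c, t, rfl, ?_, ?_⟩
    · intro h1
      have := congrArg FreeMonoid.length h1
      simp at this
    · intro h1
      subst h1
      simp [FreeMonoid.length_mul] at h

/-! ### The generated congruence -/

theorem presCon_of {T : Set (FreeMonoid X × FreeMonoid X)} {x y : FreeMonoid X}
    (h : (x, y) ∈ T) : presCon T x y := ConGen.Rel.of x y h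

/-- A word related (by the presentation congruence) to a different word contains
a relation word as a factor. -/
theorem rel_cases {T : Set (FreeMonoid X × FreeMonoid X)} {u v : FreeMonoid X}
    (h : presCon T u v) :
    u = v ∨ ((∃ w, IsRelWord T w ∧ IsFactor w u) ∧ (∃ w, IsRelWord T w ∧ IsFactor w v)) := by
  have h' : ConGen.Rel (fun u v => (u, v) ∈ T) u v := h
  clear h
  induction h' with
  | of x y hxy =>
    exact Or.inr ⟨⟨x, ⟨(x, y), hxy, Or.inl rfl⟩, isFactor_self x⟩,
      ⟨y, ⟨(x, y), hxy, Or.inr rfl⟩, isFactor_self y⟩⟩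
  | refl x => exact Or.inl rfl
  | symm _ ih => tauto
  | trans h1 h2 ih1 ih2 =>
    rcases ih1 with rfl | ⟨hu, hv⟩
    · exact ih2
    · rcases ih2 with rfl | ⟨hv', hw⟩
      · exact Or.inr ⟨hu, hv⟩
      · exact Or.inr ⟨hu, hw⟩
  | mul h1 h2 ih1 ih2 =>
    rcases ih1 with rfl | ⟨⟨w1, hw1, hf1⟩, ⟨w2, hw2, hf2⟩⟩
    · rcases ih2 with rfl | ⟨⟨w1, hw1, hf1⟩, ⟨w2, hw2, hf2⟩⟩
      · exact Or.inl rfl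
      · exact Or.inr ⟨⟨w1, hw1, isFactor_mul_left _ hf1⟩, ⟨w2, hw2, isFactor_mul_left _ hf2⟩⟩
    · exact Or.inr ⟨⟨w1, hw1, isFactor_mul_right _ hf1⟩, ⟨w2, hw2, isFactor_mul_right _ hf2⟩⟩

/-- Under the congruence generated by a sub-presentation. -/
theorem presCon_mono {T T' : Set (FreeMonoid X × FreeMonoid X)} (hTT : T' ⊆ T)
    {u v : FreeMonoid X} (h : presCon T' u v) : presCon T u v :=
  Con.conGen_mono (fun _ _ hxy => hTT hxy) h

/-! ### Consequences of the small overlap conditions -/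

theorem relword_ne_one_s10 {T : Set (FreeMonoid X × FreeMonoid X)} {m : ℕ}
    (hC : SmallOverlapC T m) (hm : 1 ≤ m) : ¬ IsRelWord T 1 := by
  intro hw
  have := hC 1 hw [] (by simp) (by simp)
  simp at this
  omega

theorem relword_not_piece {T : Set (FreeMonoid X × FreeMonoid X)} {m : ℕ}
    (hC : SmallOverlapC T m) (hm : 2 ≤ m) {w : FreeMonoid X} (hw : IsRelWord T w) :
    ¬ IsPiece T w := by
  intro hp
  have := hC w hw [w] (by simpa using hp) (by simp)
  simp at this
  omega

theorem letter_unique {T : Set (FreeMonoid X × FreeMonoid X)} {m : ℕ}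
    (hC : SmallOverlapC T m) (hm : 2 ≤ m) {b : X} (hb : IsRelWord T (of b))
    {w : FreeMonoid X} (hw : IsRelWord T w) (hf : IsFactor (of b) w) : w = of b := by
  by_contra hne
  exact relword_not_piece hC hm hb
    (Or.inr (Or.inl ⟨of b, w, hb, hw, fun hh => hne hh.symm, isFactor_self _, hf⟩))

/-! ### Consequences of no repeated relation words -/

theorem norep_fst_fst {T : Set (FreeMonoid X × FreeMonoid X)} (hN : NoRepeatedRelWords T)
    {p q : FreeMonoid X × FreeMonoid X} (hp : p ∈ T) (hq : q ∈ T) (h : p.1 = q.1) : p = q := by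
  by_contra hne
  exact (hN.2 p hp q hq hne).1 h

theorem norep_fst_snd {T : Set (FreeMonoid X × FreeMonoid X)} (hN : NoRepeatedRelWords T)
    {p q : FreeMonoid X × FreeMonoid X} (hp : p ∈ T) (hq : q ∈ T) (h : p.1 = q.2) : False := by
  by_cases hne : p = q
  · subst hne
    exact hN.1 p hp h
  · exact (hN.2 p hp q hq hne).2.1 h

theorem norep_snd_snd {T : Set (FreeMonoid X × FreeMonoid X)} (hN : NoRepeatedRelWords T)
    {p q : FreeMonoid X × FreeMonoid X} (hp : p ∈ T) (hq : q ∈ T) (h : p.2 = q.2) : p = q := by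
  by_contra hne
  exact (hN.2 p hp q hq hne).2.2.2 h

/-- If every relation word has length at least two, words of length at most one
form singleton congruence classes. -/
theorem short_rigid {T : Set (FreeMonoid X × FreeMonoid X)}
    (hlen : ∀ w, IsRelWord T w → 2 ≤ w.length) {u v : FreeMonoid X}
    (h : presCon T u v) (hu : u.length ≤ 1) : u = v := by
  rcases rel_cases h with rfl | ⟨⟨w, hw, hf⟩, _⟩
  · rfl
  · have := isFactor_length hf
    have := hlen w hw
    omega

end Aux

section RSide

variable {A : Type u} {R : Set (FreeMonoid A × FreeMonoid A)}

/-- In a generator-minimal strongly C(2) presentation every relation word has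
length at least 2. -/
theorem mem_closure_of_avoid {a : A} (vv : FreeMonoid A)
    (hnotin : ∀ b ∈ FreeMonoid.toList vv, b ≠ a) :
    (presCon R).mk' vv ∈
      Submonoid.closure {x : (presCon R).Quotient | ∃ b : A, b ≠ a ∧ x = (presCon R).mk' (of b)} := by
  induction vv using FreeMonoid.recOn with
  | one =>
    rw [map_one]
    exact one_mem _
  | of_mul c t IH =>
    rw [map_mul]
    refine mul_mem (Submonoid.subset_closure ⟨c, ?_, rfl⟩) (IH ?_)
    · exact hnotin c (by simp [toList_mul])
    · intro b hb
      exact hnotin b (by simp [toList_mul]; tauto)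

theorem R_relword_len (hmin : GeneratorMinimal R) (hC2 : StronglyC R 2) :
    ∀ w, IsRelWord R w → 2 ≤ w.length := by
  intro w hw
  by_contra hlen
  push_neg at hlen
  interval_cases hh : w.length
  · exact relword_ne_one_s10 hC2.1 (by norm_num) (FreeMonoid.length_eq_zero.mp hh ▸ hw)
  · obtain ⟨a, rfl⟩ := FreeMonoid.length_eq_one.mp hh
    -- get the partner relation
    obtain ⟨p, hp, hside⟩ := id hw
    -- the partner word
    have key : ∀ vv : FreeMonoid A, ((of a, vv) ∈ R ∨ (vv, of a) ∈ R) → vv ≠ of a →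
        IsRedundant R a := by
      intro vv hvv hne
      have hvrel : IsRelWord R vv := by
        rcases hvv with h1 | h1
        · exact ⟨(of a, vv), h1, Or.inr rfl⟩
        · exact ⟨(vv, of a), h1, Or.inl rfl⟩
      have hnotin : ∀ b ∈ FreeMonoid.toList vv, b ≠ a := by
        intro b hb hba
        subst hba
        exact hne (letter_unique hC2.1 le_rfl hw hvrel (factor_of_mem hb))
      have hcon : presCon R (of a) vv := by
        rcases hvv with h1 | h1
        · exact presCon_of h1
        · exact (presCon R).symm (presCon_of h1)
      have hmkeq : (presCon R).mk' (of a) = (presCon R).mk' vv := (Con.eq _).mpr hcon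
      rw [IsRedundant, hmkeq]
      exact mem_closure_of_avoid vv hnotin
    have hpp : (p.1, p.2) ∈ R := by simpa using hp
    rcases hside with h1 | h1
    · exact hmin a (key p.2 (Or.inl (h1 ▸ hpp)) fun hh =>
        hC2.2.1 p hp (by rw [h1, hh]))
    · exact hmin a (key p.1 (Or.inr (h1 ▸ hpp)) fun hh =>
        hC2.2.1 p hp (by rw [h1, hh]))

end RSide

section SSide

variable {B : Type v}

/-- Letters which are removable: they occur as a length-one relation word. -/
def Dset (S : Set (FreeMonoid B × FreeMonoid B)) : Set B :=
  {b | (∃ w, (of b, w) ∈ S) ∨ (∃ w, (w, of b) ∈ S ∧ 2 ≤ w.length)}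

open scoped Classical in
/-- The projection on letters: a removable letter is replaced by the other side of
its relation. -/
noncomputable def piLetter (S : Set (FreeMonoid B × FreeMonoid B)) (b : B) : FreeMonoid B :=
  if h : ∃ w, (of b, w) ∈ S then h.choose
  else if h2 : ∃ w, (w, of b) ∈ S ∧ 2 ≤ w.length then h2.choose
  else of b

/-- The restricted presentation: only relations with both sides long. -/
def Sres (S : Set (FreeMonoid B × FreeMonoid B)) : Set (FreeMonoid B × FreeMonoid B) :=
  {p ∈ S | 2 ≤ p.1.length ∧ 2 ≤ p.2.length}

/-- The projection homomorphism. -/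
noncomputable def piHom (S : Set (FreeMonoid B × FreeMonoid B)) :
    FreeMonoid B →* FreeMonoid B :=
  FreeMonoid.lift (piLetter S)

variable {S : Set (FreeMonoid B × FreeMonoid B)} {m : ℕ}

theorem Sres_subset : Sres S ⊆ S := fun p hp => hp.1

theorem Sres_relword {w : FreeMonoid B} (h : IsRelWord (Sres S) w) : IsRelWord S w := by
  obtain ⟨p, hp, hside⟩ := h
  exact ⟨p, hp.1, hside⟩

theorem Sres_relword_len {w : FreeMonoid B} (h : IsRelWord (Sres S) w) : 2 ≤ w.length := by
  obtain ⟨p, hp, hside⟩ := h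
  rcases hside with rfl | rfl
  · exact hp.2.1
  · exact hp.2.2

theorem mem_Dset_relword {b : B} (hb : b ∈ Dset S) : IsRelWord S (of b) := by
  rcases hb with ⟨w, hw⟩ | ⟨w, hw, _⟩
  · exact ⟨(of b, w), hw, Or.inl rfl⟩
  · exact ⟨(w, of b), hw, Or.inr rfl⟩

variable (hS : StronglyC S m) (hm2 : 2 ≤ m)
include hS hm2

/-- Long relation words avoid removable letters. -/
theorem long_relword_avoid {w : FreeMonoid B} (hw : IsRelWord S w) (hlen : 2 ≤ w.length) :
    ∀ c, c ∈ FreeMonoid.toList w → c ∉ Dset S := by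
  intro c hc hcD
  have h1 := letter_unique hS.1 hm2 (mem_Dset_relword hcD) hw (factor_of_mem hc)
  rw [h1] at hlen
  simp [FreeMonoid.length_of] at hlen

theorem piLetter_of_not_mem {b : B} (hb : b ∉ Dset S) : piLetter S b = of b := by
  rw [piLetter, dif_neg, dif_neg]
  · intro h
    exact hb (Or.inr h)
  · intro h
    exact hb (Or.inl h)

theorem piLetter_fst {b : B} {w : FreeMonoid B} (hw : (of b, w) ∈ S) : piLetter S b = w := by
  have hex : ∃ w, (of b, w) ∈ S := ⟨w, hw⟩
  rw [piLetter, dif_pos hex]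
  have hc := hex.choose_spec
  have := norep_fst_fst hS.2 hc hw rfl
  exact congrArg Prod.snd this

theorem piLetter_snd {b : B} {w : FreeMonoid B} (hw : (w, of b) ∈ S) (hlen : 2 ≤ w.length) :
    piLetter S b = w := by
  have hnex : ¬ ∃ w', (of b, w') ∈ S := by
    rintro ⟨w', hw'⟩
    exact norep_fst_snd hS.2 hw' hw rfl
  have hex : ∃ w', (w', of b) ∈ S ∧ 2 ≤ w'.length := ⟨w, hw, hlen⟩
  rw [piLetter, dif_neg hnex, dif_pos hex]
  have hc := hex.choose_spec
  have := norep_snd_snd hS.2 hc.1 hw rfl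
  exact congrArg Prod.fst this

/-- The letter projection is congruent to the identity. -/
theorem piLetter_rel (b : B) : presCon S (piLetter S b) (of b) := by
  rw [piLetter]
  split_ifs with h1 h2
  · exact (presCon S).symm (presCon_of h1.choose_spec)
  · exact presCon_of h2.choose_spec.1
  · exact (presCon S).refl _

/-- The projection of any letter avoids removable letters. -/
theorem piLetter_avoid (b : B) : ∀ c, c ∈ FreeMonoid.toList (piLetter S b) → c ∉ Dset S := by
  by_cases hb : b ∈ Dset S
  · rcases hb with ⟨w, hw⟩ | ⟨w, hw, hwl⟩
    · rw [piLetter_fst hS hm2 hw]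
      have hwrel : IsRelWord S w := ⟨(of b, w), hw, Or.inr rfl⟩
      rcases Nat.lt_or_ge w.length 2 with hlt | hge
      · interval_cases hh : w.length
        · exact absurd (FreeMonoid.length_eq_zero.mp hh ▸ hwrel)
            (relword_ne_one_s10 hS.1 (by omega))
        · obtain ⟨c0, rfl⟩ := FreeMonoid.length_eq_one.mp hh
          intro c hc hcD
          simp [FreeMonoid.toList_of] at hc
          subst hc
          rcases hcD with ⟨w', hw'⟩ | ⟨w', hw', hwl'⟩
          · exact norep_fst_snd hS.2 hw' hw rfl
          · have := norep_snd_snd hS.2 hw' hw rfl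
            have h2 := congrArg Prod.fst this
            simp at h2
            subst h2
            simp [FreeMonoid.length_of] at hwl'
      · exact long_relword_avoid hS hm2 hwrel hge
    · rw [piLetter_snd hS hm2 hw hwl]
      exact long_relword_avoid hS hm2 ⟨(w, of b), hw, Or.inl rfl⟩ hwl
  · rw [piLetter_of_not_mem hS hm2 hb]
    intro c hc
    simp [FreeMonoid.toList_of] at hc
    subst hc
    exact hb

theorem piHom_avoid (u : FreeMonoid B) :
    ∀ c, c ∈ FreeMonoid.toList (piHom S u) → c ∉ Dset S := by
  induction u using FreeMonoid.recOn with
  | one =>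
    intro c hc
    simp [piHom] at hc
  | of_mul x xs IH =>
    intro c hc
    rw [piHom, map_mul] at hc
    simp only [toList_mul, List.mem_append] at hc
    rcases hc with hc | hc
    · exact piLetter_avoid hS hm2 x c (by simpa [piHom, FreeMonoid.lift_eval_of] using hc)
    · exact IH c hc

theorem piHom_fix {u : FreeMonoid B} (hu : ∀ c, c ∈ FreeMonoid.toList u → c ∉ Dset S) :
    piHom S u = u := by
  induction u using FreeMonoid.recOn with
  | one => simp [piHom]
  | of_mul x xs IH =>
    rw [piHom, map_mul]
    have hx : x ∉ Dset S := hu x (by simp [toList_mul, FreeMonoid.toList_of])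
    have h1 : FreeMonoid.lift (piLetter S) (of x) = of x := by
      rw [FreeMonoid.lift_eval_of, piLetter_of_not_mem hS hm2 hx]
    rw [h1]
    congr 1
    exact IH fun c hc => hu c (by simp [toList_mul]; tauto)

theorem piHom_rel (u : FreeMonoid B) : presCon S (piHom S u) u := by
  induction u using FreeMonoid.recOn with
  | one => simp [piHom]; exact (presCon S).refl _
  | of_mul x xs IH =>
    rw [piHom, map_mul]
    have h1 : FreeMonoid.lift (piLetter S) (of x) = piLetter S x := FreeMonoid.lift_eval_of _ _
    rw [h1]
    exact (presCon S).mul (piLetter_rel hS hm2 x) IH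

/-- The projection sends each relation either to a restricted relation or
collapses it. -/
theorem piHom_rel_of_mem {p : FreeMonoid B × FreeMonoid B} (hp : p ∈ S) :
    (piHom S p.1, piHom S p.2) ∈ Sres S ∨ piHom S p.1 = piHom S p.2 := by
  have h1 : p.1 ≠ 1 := fun hh => relword_ne_one_s10 hS.1 (by omega) (hh ▸ ⟨p, hp, Or.inl rfl⟩)
  have h2 : p.2 ≠ 1 := fun hh => relword_ne_one_s10 hS.1 (by omega) (hh ▸ ⟨p, hp, Or.inr rfl⟩)
  have hl1 := length_pos_of_ne_one h1
  have hl2 := length_pos_of_ne_one h2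
  have hpp : (p.1, p.2) ∈ S := by simpa using hp
  rcases Nat.lt_or_ge p.1.length 2 with hp1 | hp1
  · -- p.1 is a single letter
    have hh : p.1.length = 1 := by omega
    obtain ⟨b, hb⟩ := FreeMonoid.length_eq_one.mp hh
    right
    have hb1 : piHom S p.1 = p.2 := by
      rw [hb, piHom, FreeMonoid.lift_eval_of]
      exact piLetter_fst hS hm2 (hb ▸ hpp)
    rcases Nat.lt_or_ge p.2.length 2 with hq1 | hq1
    · have hh2 : p.2.length = 1 := by omega
      obtain ⟨c, hc⟩ := FreeMonoid.length_eq_one.mp hh2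
      have hcD : c ∉ Dset S := by
        rintro (⟨w', hw'⟩ | ⟨w', hw', hwl'⟩)
        · exact norep_fst_snd hS.2 hw' hp hc.symm
        · have heq := norep_snd_snd hS.2 hw' hp hc.symm
          have h3 : w' = p.1 := congrArg Prod.fst heq
          rw [h3, hh] at hwl'
          omega
      have hfix : piHom S p.2 = p.2 := by
        rw [hc, piHom, FreeMonoid.lift_eval_of, piLetter_of_not_mem hS hm2 hcD]
      rw [hb1, hfix]
    · rw [hb1, piHom_fix hS hm2 (long_relword_avoid hS hm2 ⟨p, hp, Or.inr rfl⟩ hq1)]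
  · rcases Nat.lt_or_ge p.2.length 2 with hq1 | hq1
    · have hh2 : p.2.length = 1 := by omega
      obtain ⟨b, hb⟩ := FreeMonoid.length_eq_one.mp hh2
      right
      have hb2 : piHom S p.2 = p.1 := by
        rw [hb, piHom, FreeMonoid.lift_eval_of]
        exact piLetter_snd hS hm2 (hb ▸ hpp) hp1
      rw [hb2, piHom_fix hS hm2 (long_relword_avoid hS hm2 ⟨p, hp, Or.inl rfl⟩ hp1)]
    · left
      rw [piHom_fix hS hm2 (long_relword_avoid hS hm2 ⟨p, hp, Or.inl rfl⟩ hp1),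
        piHom_fix hS hm2 (long_relword_avoid hS hm2 ⟨p, hp, Or.inr rfl⟩ hq1)]
      exact ⟨hp, hp1, hq1⟩

/-- Transfer of the congruence to the restricted presentation. -/
theorem presCon_to_Sres {u v : FreeMonoid B} (h : presCon S u v) :
    presCon (Sres S) (piHom S u) (piHom S v) := by
  have h' : ConGen.Rel (fun u v => (u, v) ∈ S) u v := h
  clear h
  induction h' with
  | of x y hxy =>
    rcases piHom_rel_of_mem hS hm2 (p := (x, y)) hxy with hmem | heq
    · exact presCon_of hmem
    · rw [heq]
      exact (presCon (Sres S)).refl _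
  | refl x => exact (presCon (Sres S)).refl _
  | symm _ ih => exact (presCon (Sres S)).symm ih
  | trans _ _ ih1 ih2 => exact (presCon (Sres S)).trans ih1 ih2
  | mul _ _ ih1 ih2 =>
    have := Con.mul (presCon (Sres S)) ih1 ih2
    rwa [← map_mul, ← map_mul] at this

end SSide


/-- **Corollary.** A generator-minimal strongly C(2) presentation for a monoid which
admits a strongly C(m) presentation is itself strongly C(m). -/
theorem statement10 {A : Type u} (R : Set (FreeMonoid A × FreeMonoid A)) (m : ℕ)
    (hm : 1 ≤ m) (hmin : GeneratorMinimal R) (hC2 : StronglyC R 2)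
    (h : ∃ (B : Type v) (S : Set (FreeMonoid B × FreeMonoid B)),
      StronglyC S m ∧ Nonempty ((presCon R).Quotient ≃* (presCon S).Quotient)) :
    StronglyC R m := by
  refine ⟨?_, hC2.2⟩
  rcases le_or_gt m 2 with hm2 | hm2'
  · intro w hw l hl hprod
    exact le_trans hm2 (hC2.1 w hw l hl hprod)
  have hm2 : 2 ≤ m := by omega
  obtain ⟨B, S, hS, ⟨e⟩⟩ := h
  -- the composite map to the second quotient
  set F : FreeMonoid A → (presCon S).Quotient := fun u => e ((presCon R).mk' u) with hF
  have hFdef : ∀ u, F u = e ((presCon R).mk' u) := fun _ => rfl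
  have hRlen := R_relword_len hmin hC2
  have hRrigid : ∀ u v : FreeMonoid A, presCon R u v → u.length ≤ 1 → u = v :=
    fun u v h hu => short_rigid hRlen h hu
  have hSrigid : ∀ x y : FreeMonoid B, presCon (Sres S) x y → x.length ≤ 1 → x = y :=
    fun x y h hx => short_rigid (fun w hw => Sres_relword_len hw) h hx
  have eRmk : ∀ u v : FreeMonoid A, F u = F v → presCon R u v := by
    intro u v huv
    exact (Con.eq _).mp (e.injective huv)
  have claimS' : ∀ x y : FreeMonoid B, (∀ c ∈ FreeMonoid.toList x, c ∉ Dset S) →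
      (∀ c ∈ FreeMonoid.toList y, c ∉ Dset S) →
      (presCon S).mk' x = (presCon S).mk' y → presCon (Sres S) x y := by
    intro x y hx hy hxy
    have := presCon_to_Sres hS hm2 ((Con.eq _).mp hxy)
    rwa [piHom_fix hS hm2 hx, piHom_fix hS hm2 hy] at this
  -- representatives of the images of the generators
  have hrep : ∀ a : A, ∃ u : FreeMonoid B, (presCon S).mk' u = F (of a) :=
    fun a => Con.mk'_surjective _
  choose urep hurep using hrep
  set t : A → FreeMonoid B := fun a => piHom S (urep a) with htdef
  have ht1 : ∀ a, (presCon S).mk' (t a) = F (of a) := by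
    intro a
    rw [htdef]
    rw [← hurep a]
    exact (Con.eq _).mpr (piHom_rel hS hm2 (urep a))
  have ht2 : ∀ a, ∀ c ∈ FreeMonoid.toList (t a), c ∉ Dset S :=
    fun a c hc => piHom_avoid hS hm2 (urep a) c hc
  -- each generator image is a single letter
  have hta : ∀ a, (t a).length = 1 := by
    intro a
    rcases Nat.lt_or_ge (t a).length 1 with hlt | hge1
    · exfalso
      have h0 : t a = 1 := FreeMonoid.length_eq_zero.mp (by omega)
      have : F (of a) = F 1 := by
        rw [← ht1 a, h0]
        simp [hFdef]
      have h2 := hRrigid _ _ ((presCon R).symm (eRmk _ _ this)) (by simp)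
      have := congrArg FreeMonoid.length h2
      simp [FreeMonoid.length_of] at this
    rcases Nat.lt_or_ge (t a).length 2 with hlt2 | hge2
    · omega
    exfalso
    obtain ⟨x, y, hxy, hx1, hy1⟩ := exists_split hge2
    obtain ⟨s1, hs1⟩ := Con.mk'_surjective (e.symm ((presCon S).mk' x))
    obtain ⟨s2, hs2⟩ := Con.mk'_surjective (e.symm ((presCon S).mk' y))
    have hFs : F (s1 * s2) = F (of a) := by
      rw [hFdef, map_mul, map_mul, hs1, hs2, MulEquiv.apply_symm_apply,
        MulEquiv.apply_symm_apply, ← map_mul, ← hxy, ht1 a]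
    have heq : of a = s1 * s2 :=
      hRrigid _ _ ((presCon R).symm (eRmk _ _ hFs)) (by simp [FreeMonoid.length_of])
    have hlen : s1.length + s2.length = 1 := by
      have := congrArg FreeMonoid.length heq
      simp [FreeMonoid.length_mul, FreeMonoid.length_of] at this
      omega
    have havx : ∀ c ∈ FreeMonoid.toList x, c ∉ Dset S := by
      intro c hc
      exact ht2 a c (by rw [hxy, toList_mul]; exact List.mem_append_left _ hc)
    have havy : ∀ c ∈ FreeMonoid.toList y, c ∉ Dset S := by
      intro c hc
      exact ht2 a c (by rw [hxy, toList_mul]; exact List.mem_append_right _ hc)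
    rcases Nat.eq_zero_or_pos s1.length with hz | hpos
    · have hs1' : s1 = 1 := FreeMonoid.length_eq_zero.mp hz
      have : (presCon S).mk' x = (presCon S).mk' 1 := by
        have := congrArg e hs1
        rw [MulEquiv.apply_symm_apply] at this
        rw [← this, hs1', map_one, map_one, map_one]
      have h2 := hSrigid _ _ ((presCon (Sres S)).symm (claimS' x 1 havx (by simp) this)) (by simp)
      exact hx1 h2.symm
    · have hz2 : s2.length = 0 := by omega
      have hs2' : s2 = 1 := FreeMonoid.length_eq_zero.mp hz2
      have : (presCon S).mk' y = (presCon S).mk' 1 := by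
        have := congrArg e hs2
        rw [MulEquiv.apply_symm_apply] at this
        rw [← this, hs2', map_one, map_one, map_one]
      have h2 := hSrigid _ _ ((presCon (Sres S)).symm (claimS' y 1 havy (by simp) this)) (by simp)
      exact hy1 h2.symm
  choose σ hσ using fun a => FreeMonoid.length_eq_one.mp (hta a)
  set τ : FreeMonoid A →* FreeMonoid B := FreeMonoid.map σ with hτ
  have hτof : ∀ a, τ (of a) = of (σ a) := fun a => FreeMonoid.map_of σ a
  have hτmk : ∀ u, (presCon S).mk' (τ u) = F u := by
    intro u
    induction u using FreeMonoid.recOn with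
    | one => simp [hFdef]
    | of_mul a s IH =>
      rw [map_mul, map_mul, hτof, ← hσ, ht1, IH]
      simp only [hFdef]
      rw [map_mul, map_mul]
  have hτavoid : ∀ u, ∀ c ∈ FreeMonoid.toList (τ u), c ∉ Dset S := by
    intro u c hc
    rw [hτ, toList_map] at hc
    obtain ⟨a, _, rfl⟩ := List.mem_map.mp hc
    exact ht2 a (σ a) (by rw [hσ a, FreeMonoid.toList_of]; simp)
  have hτinj : Function.Injective τ := by
    have hσinj : Function.Injective σ := by
      intro a a' haa
      have h1 : F (of a) = F (of a') := by
        rw [← ht1, ← ht1, hσ, hσ, haa]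
      have h2 := hRrigid _ _ (eRmk _ _ h1) (by simp [FreeMonoid.length_of])
      have := congrArg FreeMonoid.toList h2
      simp [FreeMonoid.toList_of] at this
      exact this
    intro u u' huu
    have := congrArg FreeMonoid.toList huu
    rw [hτ, toList_map, toList_map] at this
    exact toList_injective (List.map_injective_iff.mpr hσinj this)
  have hτlen : ∀ u, (τ u).length = u.length := by
    intro u
    show (FreeMonoid.toList (τ u)).length = (FreeMonoid.toList u).length
    rw [hτ, toList_map, List.length_map]
  -- transfer of the congruence
  have hfwd : ∀ u v, presCon R u v → presCon (Sres S) (τ u) (τ v) := by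
    intro u v huv
    refine claimS' _ _ (hτavoid u) (hτavoid v) ?_
    rw [hτmk, hτmk]
    exact congrArg e ((Con.eq _).mpr huv)
  have hbwd : ∀ u v, presCon (Sres S) (τ u) (τ v) → presCon R u v := by
    intro u v huv
    have h1 : presCon S (τ u) (τ v) := presCon_mono Sres_subset huv
    have h2 : (presCon S).mk' (τ u) = (presCon S).mk' (τ v) := (Con.eq _).mpr h1
    rw [hτmk, hτmk] at h2
    exact eRmk _ _ h2
  -- surjectivity onto words avoiding removable letters
  have hletter : ∀ b, b ∉ Dset S → ∃ a, σ a = b := by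
    intro b hb
    obtain ⟨s, hs⟩ := Con.mk'_surjective (e.symm ((presCon S).mk' (of b)))
    have hFs : F s = (presCon S).mk' (of b) := by
      rw [hFdef, hs, MulEquiv.apply_symm_apply]
    have hmkeq : (presCon S).mk' (τ s) = (presCon S).mk' (of b) := by rw [hτmk, hFs]
    have hcon : presCon (Sres S) (τ s) (of b) :=
      claimS' _ _ (hτavoid s) (by rw [FreeMonoid.toList_of]; simpa using hb) hmkeq
    have heq : of b = τ s :=
      hSrigid _ _ ((presCon (Sres S)).symm hcon) (by simp [FreeMonoid.length_of])
    have hslen : s.length = 1 := by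
      have := congrArg FreeMonoid.length heq
      rw [hτlen] at this
      simp [FreeMonoid.length_of] at this
      omega
    obtain ⟨a, rfl⟩ := FreeMonoid.length_eq_one.mp hslen
    refine ⟨a, ?_⟩
    rw [hτof] at heq
    have := congrArg FreeMonoid.toList heq
    simp [FreeMonoid.toList_of] at this
    exact this.symm
  have hsurj : ∀ x : FreeMonoid B, (∀ c ∈ FreeMonoid.toList x, c ∉ Dset S) →
      ∃ u, τ u = x := by
    intro x
    induction x using FreeMonoid.recOn with
    | one => exact fun _ => ⟨1, map_one τ⟩
    | of_mul c s IH =>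
      intro hx
      obtain ⟨a, ha⟩ := hletter c (hx c (by simp [toList_mul, FreeMonoid.toList_of]))
      obtain ⟨u', hu'⟩ := IH (fun d hd => hx d (by rw [toList_mul]; exact List.mem_append_right _ hd))
      exact ⟨of a * u', by rw [map_mul, hτof, ha, hu']⟩
  -- relation words map to relation words
  have hrelword : ∀ w, IsRelWord R w → IsRelWord (Sres S) (τ w) := by
    intro w hw
    obtain ⟨p, hp, hside⟩ := id hw
    have hpp : (p.1, p.2) ∈ R := by simpa using hp
    obtain ⟨w', hww', hne⟩ : ∃ w', presCon R w w' ∧ w ≠ w' := by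
      rcases hside with h1 | h1
      · exact ⟨p.2, h1 ▸ presCon_of hpp, fun hh => hC2.2.1 p hp (by rw [h1, ← hh])⟩
      · exact ⟨p.1, (presCon R).symm (h1 ▸ presCon_of hpp),
          fun hh => hC2.2.1 p hp (by rw [h1, ← hh])⟩
    have hcon := hfwd w w' hww'
    have hτne : τ w ≠ τ w' := fun hh => hne (hτinj hh)
    rcases rel_cases hcon with heq | ⟨⟨z, hzrel, x, y, hxyz⟩, _⟩
    · exact absurd heq hτne
    -- z is a relation word of Sres S which is a factor of τ w
    have hzavoid : ∀ c ∈ FreeMonoid.toList z, c ∉ Dset S :=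
      long_relword_avoid hS hm2 (Sres_relword hzrel) (Sres_relword_len hzrel)
    have hxavoid : ∀ c ∈ FreeMonoid.toList x, c ∉ Dset S := by
      intro c hc
      refine hτavoid w c ?_
      rw [hxyz, toList_mul, toList_mul]
      exact List.mem_append_left _ (List.mem_append_left _ hc)
    have hyavoid : ∀ c ∈ FreeMonoid.toList y, c ∉ Dset S := by
      intro c hc
      refine hτavoid w c ?_
      rw [hxyz, toList_mul]
      exact List.mem_append_right _ hc
    obtain ⟨x₀, rfl⟩ := hsurj x hxavoid
    obtain ⟨y₀, rfl⟩ := hsurj y hyavoid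
    obtain ⟨z₀, rfl⟩ := hsurj z hzavoid
    have hw0 : w = x₀ * z₀ * y₀ := by
      apply hτinj
      rw [hxyz, map_mul, map_mul]
    -- z₀ contains a relation word of R
    obtain ⟨q, hq, hzside⟩ := id hzrel
    have hqq : (q.1, q.2) ∈ Sres S := by simpa using hq
    obtain ⟨z', hzz', hzne⟩ : ∃ z', presCon (Sres S) (τ z₀) z' ∧ τ z₀ ≠ z' ∧
        IsRelWord (Sres S) z' := by
      rcases hzside with h1 | h1
      · exact ⟨q.2, h1 ▸ presCon_of hqq,
          ⟨fun hh => hS.2.1 q hq.1 (by rw [h1, ← hh]), ⟨q, hq, Or.inr rfl⟩⟩⟩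
      · exact ⟨q.1, (presCon (Sres S)).symm (h1 ▸ presCon_of hqq),
          ⟨fun hh => hS.2.1 q hq.1 (by rw [h1, ← hh]), ⟨q, hq, Or.inl rfl⟩⟩⟩
    obtain ⟨hzne, hz'rel⟩ := hzne
    have hz'avoid : ∀ c ∈ FreeMonoid.toList z', c ∉ Dset S :=
      long_relword_avoid hS hm2 (Sres_relword hz'rel) (Sres_relword_len hz'rel)
    obtain ⟨z₀', rfl⟩ := hsurj z' hz'avoid
    have hz0con : presCon R z₀ z₀' := hbwd _ _ hzz'
    have hz0ne : z₀ ≠ z₀' := fun hh => hzne (by rw [hh])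
    rcases rel_cases hz0con with heq0 | ⟨⟨w₁, hw₁rel, hw₁f⟩, _⟩
    · exact absurd heq0 hz0ne
    -- w₁ is a relation word of R and a factor of z₀, hence of w
    have hw₁w : w₁ = w := by
      by_contra hne₁
      refine relword_not_piece hC2.1 le_rfl hw₁rel ?_
      refine Or.inr (Or.inl ⟨w₁, w, hw₁rel, hw, hne₁, isFactor_self w₁, ?_⟩)
      refine isFactor_trans hw₁f ⟨x₀, y₀, ?_⟩
      rw [hw0]
    -- lengths force x₀ = y₀ = 1
    have hlenle : w.length ≤ z₀.length := hw₁w ▸ isFactor_length hw₁f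
    have hlen0 : x₀.length = 0 ∧ y₀.length = 0 := by
      have := congrArg FreeMonoid.length hw0
      simp [FreeMonoid.length_mul] at this
      omega
    have hx0 : x₀ = 1 := FreeMonoid.length_eq_zero.mp hlen0.1
    have hy0 : y₀ = 1 := FreeMonoid.length_eq_zero.mp hlen0.2
    have : τ w = τ z₀ := by
      rw [hw0, hx0, hy0, one_mul, mul_one]
    rw [this]
    exact hzrel
  -- pieces map to pieces
  have hpiece : ∀ pc, IsPiece R pc → IsPiece S (τ pc) := by
    intro pc hpc
    rcases hpc with rfl | ⟨w1, w2, h1, h2, hne, f1, f2⟩ | ⟨w0, hwrel, x, y, x', y', e1, e2, hne⟩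
    · exact Or.inl (map_one τ)
    · refine Or.inr (Or.inl ⟨τ w1, τ w2, Sres_relword (hrelword w1 h1),
        Sres_relword (hrelword w2 h2), fun hh => hne (hτinj hh), ?_, ?_⟩)
      · obtain ⟨px, qx, hpq⟩ := f1
        exact ⟨τ px, τ qx, by rw [hpq, map_mul, map_mul]⟩
      · obtain ⟨px, qx, hpq⟩ := f2
        exact ⟨τ px, τ qx, by rw [hpq, map_mul, map_mul]⟩
    · refine Or.inr (Or.inr ⟨τ w0, Sres_relword (hrelword w0 hwrel),
        τ x, τ y, τ x', τ y', ?_, ?_, fun hh => hne (hτinj hh)⟩)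
      · rw [e1, map_mul, map_mul]
      · rw [e2, map_mul, map_mul]
  -- conclude
  intro w hw l hl hprod
  have hτrel : IsRelWord S (τ w) := Sres_relword (hrelword w hw)
  have := hS.1 (τ w) hτrel (l.map τ)
    (by
      intro xx hxx
      obtain ⟨pc, hpc, rfl⟩ := List.mem_map.mp hxx
      exact hpiece pc (hl pc hpc))
    (by rw [← MonoidHom.map_list_prod, hprod])
  simpa using this
end
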